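/- Let m, n be natural numbers and let M be an m×n complex matrix that is centro-Hermitian, i.e., J_m · conj(M) · J_n = M. Then every entry of Q_mᴴ · M · Q_n is real (has zero imaginary part), where Q_m and Q_n are the unitary transformation matrices defined blockwise by Q_{2k} = (1/√2)·[[I_k, i·I_k],[J_k, −i·J_k]] for even size and Q_{2k+1} = (1/√2)·[[I_k, 0, i·I_k],[0, √2, 0],[J_k, 0, −i·J_k]] for odd size. (This is the real-valued transformation property of the unitary matrix pencil method used throughout Sections III-A and III-B.) -/

import Mathlib

open Matrix

/-- The k×k anti-identity (exchange) matrix over ℂ: entry 1 iff `a + b = k - 1`. -/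
def Jmat (k : ℕ) : Matrix (Fin k) (Fin k) ℂ :=
  Matrix.of fun a b => if (a : ℕ) + (b : ℕ) = k - 1 then 1 else 0

/-- The even-size unitary transformation matrix of Eq. (51):
`Q_{2k} = (1/√2) · [[I_k, i·I_k], [J_k, −i·J_k]]`. -/
noncomputable def Qeven (k : ℕ) : Matrix (Fin (2 * k)) (Fin (2 * k)) ℂ :=
  ((Real.sqrt 2 : ℂ))⁻¹ •
    (Matrix.reindex (finSumFinEquiv.trans (finCongr (two_mul k).symm))
      (finSumFinEquiv.trans (finCongr (two_mul k).symm))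
      (Matrix.fromBlocks (1 : Matrix (Fin k) (Fin k) ℂ)
        (Complex.I • (1 : Matrix (Fin k) (Fin k) ℂ))
        (Jmat k) ((-Complex.I) • Jmat k)))

/-- Index identification for the 3×3 block structure of the odd-size matrix. -/
def oddIndexEquiv (k : ℕ) : (Fin k ⊕ (Fin 1 ⊕ Fin k)) ≃ Fin (2 * k + 1) :=
  ((Equiv.refl (Fin k)).sumCongr finSumFinEquiv).trans
    (finSumFinEquiv.trans (finCongr (by omega)))

/-- The odd-size unitary transformation matrix of Eq. (52):
`Q_{2k+1} = (1/√2) · [[I_k, 0, i·I_k], [0, √2, 0], [J_k, 0, −i·J_k]]`. -/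
noncomputable def Qodd (k : ℕ) : Matrix (Fin (2 * k + 1)) (Fin (2 * k + 1)) ℂ :=
  ((Real.sqrt 2 : ℂ))⁻¹ •
    (Matrix.reindex (oddIndexEquiv k) (oddIndexEquiv k)
      (Matrix.fromBlocks (1 : Matrix (Fin k) (Fin k) ℂ)
        (Matrix.fromCols (0 : Matrix (Fin k) (Fin 1) ℂ)
          (Complex.I • (1 : Matrix (Fin k) (Fin k) ℂ)))
        (Matrix.fromRows (0 : Matrix (Fin 1) (Fin k) ℂ) (Jmat k))
        (Matrix.fromBlocks ((Real.sqrt 2 : ℂ) • (1 : Matrix (Fin 1) (Fin 1) ℂ)) 0 0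
          ((-Complex.I) • Jmat k))))

/-- The size-s unitary transformation matrix `Q_s` of the unitary matrix pencil
method, defined as `Qeven (s/2)` for even `s` and `Qodd (s/2)` for odd `s`. -/
noncomputable def Qmat (s : ℕ) : Matrix (Fin s) (Fin s) ℂ :=
  if h : s % 2 = 0 then
    Matrix.reindex (finCongr (by omega : 2 * (s / 2) = s))
      (finCongr (by omega : 2 * (s / 2) = s)) (Qeven (s / 2))
  else
    Matrix.reindex (finCongr (by omega : 2 * (s / 2) + 1 = s))
      (finCongr (by omega : 2 * (s / 2) + 1 = s)) (Qodd (s / 2))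

lemma Jmat_mul_apply {k n : ℕ} (A : Matrix (Fin k) (Fin n) ℂ) (a : Fin k) (b : Fin n) :
    (Jmat k * A) a b = A a.rev b := by
  rw [Matrix.mul_apply]
  rw [Finset.sum_eq_single a.rev]
  · simp only [Jmat, Matrix.of_apply, Fin.val_rev]
    rw [if_pos (by have := a.isLt; omega)]
    rw [one_mul]
  · intro c _ hc
    simp only [Jmat, Matrix.of_apply]
    rw [if_neg, zero_mul]
    intro h
    apply hc
    have := a.isLt; have := c.isLt
    apply Fin.ext
    simp only [Fin.val_rev]; omega
  · simp

lemma mul_Jmat_apply {k n : ℕ} (A : Matrix (Fin n) (Fin k) ℂ) (a : Fin n) (b : Fin k) :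
    (A * Jmat k) a b = A a b.rev := by
  rw [Matrix.mul_apply]
  rw [Finset.sum_eq_single b.rev]
  · simp only [Jmat, Matrix.of_apply, Fin.val_rev]
    rw [if_pos (by have := b.isLt; omega)]
    rw [mul_one]
  · intro c _ hc
    simp only [Jmat, Matrix.of_apply]
    rw [if_neg, mul_zero]
    intro h
    apply hc
    have := b.isLt; have := c.isLt
    apply Fin.ext
    simp only [Fin.val_rev]; omega
  · simp

lemma Jmat_mul_Jmat (k : ℕ) : Jmat k * Jmat k = 1 := by
  ext a b
  rw [Jmat_mul_apply]
  have ha := a.isLt; have hb := b.isLt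
  simp only [Jmat, Matrix.of_apply, Fin.val_rev, Matrix.one_apply, Fin.ext_iff]
  split_ifs with h1 h2 h2 <;> first | rfl | (exfalso; omega)

lemma Jmat_map_conj (k : ℕ) : (Jmat k).map (starRingEnd ℂ) = Jmat k := by
  ext a b
  simp only [Jmat, Matrix.map_apply, Matrix.of_apply]
  split_ifs <;> simp

lemma Jmat_conjTranspose (k : ℕ) : (Jmat k)ᴴ = Jmat k := by
  ext a b
  simp only [Jmat, Matrix.conjTranspose_apply, Matrix.of_apply]
  rw [add_comm]
  split_ifs <;> simp

lemma smul_map_conj {m n : Type*} (c : ℂ) (A : Matrix m n ℂ) :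
    ((c • A).map (starRingEnd ℂ)) = (starRingEnd ℂ c) • A.map (starRingEnd ℂ) := by
  ext a b; simp

lemma Jmat_even (k : ℕ) :
    Jmat (2 * k) = Matrix.reindex (finSumFinEquiv.trans (finCongr (two_mul k).symm))
      (finSumFinEquiv.trans (finCongr (two_mul k).symm))
      (Matrix.fromBlocks 0 (Jmat k) (Jmat k) 0) := by
  have e := finSumFinEquiv.trans (finCongr (two_mul k).symm)
  rw [Matrix.reindex_apply]
  ext a b
  rw [Matrix.submatrix_apply]
  obtain ⟨i, rfl⟩ : ∃ i, (finSumFinEquiv.trans (finCongr (two_mul k).symm)) i = a :=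
    ⟨_, Equiv.apply_symm_apply _ a⟩
  obtain ⟨j, rfl⟩ : ∃ j, (finSumFinEquiv.trans (finCongr (two_mul k).symm)) j = b :=
    ⟨_, Equiv.apply_symm_apply _ b⟩
  rw [Equiv.symm_apply_apply, Equiv.symm_apply_apply]
  rcases i with i | i <;> rcases j with j | j <;>
    have hi := i.isLt <;> have hj := j.isLt <;>
    simp [Jmat, Matrix.fromBlocks, finSumFinEquiv, Fin.addCases] <;>
    first | omega | (split_ifs <;> first | rfl | omega)

lemma JQeven (k : ℕ) : (Qeven k).map (starRingEnd ℂ) = Jmat (2 * k) * Qeven k := by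
  rw [Qeven, Jmat_even, smul_map_conj]
  rw [map_inv₀, Complex.conj_ofReal]
  rw [Matrix.mul_smul]
  congr 1
  simp only [Matrix.reindex_apply]
  rw [← Matrix.submatrix_map]
  rw [Matrix.submatrix_mul_equiv]
  rw [Matrix.fromBlocks_map, Matrix.fromBlocks_multiply]
  rw [smul_map_conj, smul_map_conj]
  simp [Jmat_mul_Jmat, Matrix.mul_smul,
    (by ext a b; simp [Jmat] : (Jmat k).map (starRingEnd ℂ) = Jmat k),
    (by ext a b; simp [Matrix.one_apply, apply_ite] : ((1 : Matrix (Fin k) (Fin k) ℂ)).map (starRingEnd ℂ) = 1)]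

lemma Jmat_odd (k : ℕ) :
    Jmat (2 * k + 1) = Matrix.reindex (oddIndexEquiv k) (oddIndexEquiv k)
      (Matrix.fromBlocks 0
        (Matrix.fromCols (0 : Matrix (Fin k) (Fin 1) ℂ) (Jmat k))
        (Matrix.fromRows (0 : Matrix (Fin 1) (Fin k) ℂ) (Jmat k))
        (Matrix.fromBlocks (1 : Matrix (Fin 1) (Fin 1) ℂ) 0 0 0)) := by
  rw [Matrix.reindex_apply]
  ext a b
  rw [Matrix.submatrix_apply]
  obtain ⟨i, rfl⟩ : ∃ i, (oddIndexEquiv k) i = a := ⟨_, Equiv.apply_symm_apply _ a⟩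
  obtain ⟨j, rfl⟩ : ∃ j, (oddIndexEquiv k) j = b := ⟨_, Equiv.apply_symm_apply _ b⟩
  rw [Equiv.symm_apply_apply, Equiv.symm_apply_apply]
  rcases i with i | i | i <;> rcases j with j | j | j <;>
    have hi := i.isLt <;> have hj := j.isLt <;>
    simp [Jmat, Matrix.fromBlocks,
      oddIndexEquiv, finSumFinEquiv, Fin.addCases, Matrix.one_apply, Fin.ext_iff, -Fin.val_eq_zero_iff] <;>
    first | omega | (split_ifs <;> first | rfl | omega)

lemma fromColumns_map' {m n p : Type*} (A : Matrix m n ℂ) (B : Matrix m p ℂ) :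
    (Matrix.fromCols A B).map (starRingEnd ℂ) =
      Matrix.fromCols (A.map (starRingEnd ℂ)) (B.map (starRingEnd ℂ)) := by
  ext a (j | j) <;> simp

lemma fromRows_map' {m n p : Type*} (A : Matrix m p ℂ) (B : Matrix n p ℂ) :
    (Matrix.fromRows A B).map (starRingEnd ℂ) =
      Matrix.fromRows (A.map (starRingEnd ℂ)) (B.map (starRingEnd ℂ)) := by
  ext (a | a) j <;> simp

lemma JQodd (k : ℕ) : (Qodd k).map (starRingEnd ℂ) = Jmat (2 * k + 1) * Qodd k := by
  rw [Qodd, Jmat_odd, smul_map_conj]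
  rw [map_inv₀, Complex.conj_ofReal]
  rw [Matrix.mul_smul]
  congr 1
  simp only [Matrix.reindex_apply]
  rw [← Matrix.submatrix_map]
  rw [Matrix.submatrix_mul_equiv]
  rw [Matrix.fromBlocks_map, Matrix.fromBlocks_multiply]
  simp only [fromColumns_map', fromRows_map', Matrix.fromBlocks_map,
    smul_map_conj, map_neg, Complex.conj_I, Complex.conj_ofReal, neg_neg,
    (by ext a b; simp [Jmat] : (Jmat k).map (starRingEnd ℂ) = Jmat k),
    (by ext a b; simp [Matrix.one_apply, apply_ite] :
      ((1 : Matrix (Fin k) (Fin k) ℂ)).map (starRingEnd ℂ) = 1),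
    (by ext a b; simp [Matrix.one_apply, apply_ite] :
      ((1 : Matrix (Fin 1) (Fin 1) ℂ)).map (starRingEnd ℂ) = 1),
    (by ext a b; simp : ((0 : Matrix (Fin k) (Fin 1) ℂ)).map (starRingEnd ℂ) = 0),
    (by ext a b; simp : ((0 : Matrix (Fin 1) (Fin k) ℂ)).map (starRingEnd ℂ) = 0),
    (by ext a b; simp : ((0 : Matrix (Fin 1) (Fin 1) ℂ)).map (starRingEnd ℂ) = 0)]
  rw [Matrix.fromCols_mul_fromRows, Matrix.fromCols_mul_fromBlocks,
    Matrix.fromBlocks_mul_fromRows, Matrix.fromRows_mul_fromCols,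
    Matrix.fromBlocks_multiply]
  simp [Jmat_mul_Jmat, Matrix.mul_smul, Matrix.smul_mul, Matrix.fromBlocks_add, neg_smul]

lemma cast_JQ {a b : ℕ} (h : a = b) (Q : Matrix (Fin a) (Fin a) ℂ)
    (hQ : Q.map (starRingEnd ℂ) = Jmat a * Q) :
    (Matrix.reindex (finCongr h) (finCongr h) Q).map (starRingEnd ℂ) =
      Jmat b * Matrix.reindex (finCongr h) (finCongr h) Q := by
  subst h
  simpa using hQ

lemma JQ (s : ℕ) : (Qmat s).map (starRingEnd ℂ) = Jmat s * Qmat s := by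
  rw [Qmat]
  split_ifs with h
  · exact cast_JQ _ _ (JQeven (s / 2))
  · exact cast_JQ _ _ (JQodd (s / 2))

/-- **Real-valued transformation of centro-Hermitian matrices**
(unitary matrix pencil method, Sections III-A, III-B): if
`J_m · conj(M) · J_n = M` then every entry of `Q_mᴴ · M · Q_n` is real. -/
theorem centroHermitian_transform_real (m n : ℕ) (M : Matrix (Fin m) (Fin n) ℂ)
    (hM : Jmat m * M.map (starRingEnd ℂ) * Jmat n = M) :
    ∀ (a : Fin m) (b : Fin n), (((Qmat m)ᴴ * M * Qmat n) a b).im = 0 := by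
  have key : ((Qmat m)ᴴ * M * Qmat n).map (starRingEnd ℂ) = (Qmat m)ᴴ * M * Qmat n := by
    rw [Matrix.map_mul, Matrix.map_mul]
    have h1 : ((Qmat m)ᴴ).map (starRingEnd ℂ) = (Qmat m)ᴴ * Jmat m := by
      rw [Matrix.conjTranspose_map (starRingEnd ℂ) (fun x => by simp)]
      rw [JQ m, Matrix.conjTranspose_mul, Jmat_conjTranspose]
    rw [h1, JQ n]
    calc (Qmat m)ᴴ * Jmat m * M.map (starRingEnd ℂ) * (Jmat n * Qmat n)
        = (Qmat m)ᴴ * (Jmat m * M.map (starRingEnd ℂ) * Jmat n) * Qmat n := by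
          simp only [Matrix.mul_assoc]
      _ = (Qmat m)ᴴ * M * Qmat n := by rw [hM]
  intro a b
  rw [← Complex.conj_eq_iff_im]
  calc (starRingEnd ℂ) (((Qmat m)ᴴ * M * Qmat n) a b)
      = (((Qmat m)ᴴ * M * Qmat n).map (starRingEnd ℂ)) a b := rfl
    _ = ((Qmat m)ᴴ * M * Qmat n) a b := by rw [key]
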